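/- Let Q be a finite set, p : Q → ℕ a priority function, and π : ℕ → Q an infinite sequence with Inf(π) the set of elements occurring infinitely often in π. Then the minimum of {p(q) | q ∈ Inf(π)} is even if and only if for every i ≥ 1: if Inf(π) contains some q with p(q) = 2i − 1, then Inf(π) contains some q' with p(q') even and p(q') ≤ 2i − 2. -/
import Mathlib


/-- The set of elements occurring infinitely often in `π`. -/
def InfOcc {Q : Type} (π : ℕ → Q) : Set Q := {q | {n | π n = q}.Infinite}

lemma infOcc_nonempty {Q : Type} [Finite Q] (π : ℕ → Q) : (InfOcc π).Nonempty := by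
  obtain ⟨y, hy⟩ := Finite.exists_infinite_fiber π
  exact ⟨y, Set.infinite_coe_iff.mp hy⟩

/-- Correctness of the parity-to-Streett translation: the minimal priority seen
infinitely often is even iff for every `i ≥ 1`, whenever priority `2i - 1` occurs
infinitely often, some even priority `≤ 2i - 2` occurs infinitely often. -/
theorem parity_iff_streett {Q : Type} [Finite Q] (p : Q → ℕ) (π : ℕ → Q) :
    Even (sInf (p '' InfOcc π)) ↔
      ∀ i : ℕ, 1 ≤ i → (∃ q ∈ InfOcc π, p q = 2 * i - 1) →
        ∃ q' ∈ InfOcc π, Even (p q') ∧ p q' ≤ 2 * i - 2 := by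
  have hne : (p '' InfOcc π).Nonempty := (infOcc_nonempty π).image p
  obtain ⟨q₀, hq₀, hq₀m⟩ := Nat.sInf_mem hne
  set m := sInf (p '' InfOcc π) with hm
  constructor
  · rintro hEven i hi ⟨q, hq, hpq⟩
    have hle : m ≤ 2 * i - 1 := by rw [← hpq]; exact Nat.sInf_le ⟨q, hq, rfl⟩
    have hne' : m ≠ 2 * i - 1 := by
      intro h
      rw [h] at hEven
      have : Odd (2 * i - 1) := by
        obtain ⟨j, rfl⟩ := Nat.exists_eq_add_of_le hi
        exact ⟨j, by ring_nf; omega⟩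
      exact (Nat.not_even_iff_odd.mpr this) hEven
    exact ⟨q₀, hq₀, hq₀m ▸ hEven, by omega⟩
  · intro h
    by_contra hodd
    have hoddm : Odd m := Nat.not_even_iff_odd.mp hodd
    obtain ⟨j, hj⟩ := hoddm
    have hj1 : 1 ≤ j + 1 := le_refl _ |>.trans (by omega)
    obtain ⟨q', hq', hev, hle⟩ := h (j + 1) (by omega) ⟨q₀, hq₀, by omega⟩
    have : m ≤ p q' := Nat.sInf_le ⟨q', hq', rfl⟩
    omega
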